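/- The series 1/2 + ∑_{n≥1} (-1)^{n+1}/((2n)² - 1) converges to π/4; equivalently π/4 = 1/2 + 1/(2²-1) - 1/(4²-1) + 1/(6²-1) - ⋯. -/

import Mathlib

open Filter Finset Real

theorem madhava_series_nonoptimal_correction :
    Tendsto (fun N : ℕ => 1 / 2 + ∑ n ∈ Finset.Icc 1 N,
        (-1 : ℝ) ^ (n + 1) / ((2 * (n : ℝ)) ^ 2 - 1))
      atTop (nhds (π / 4)) := by
  set L : ℕ → ℝ := fun k => ∑ i ∈ Finset.range k, (-1 : ℝ) ^ i / (2 * i + 1) with hL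
  have key : ∀ N : ℕ, 1 / 2 + ∑ n ∈ Finset.Icc 1 N,
      (-1 : ℝ) ^ (n + 1) / ((2 * (n : ℝ)) ^ 2 - 1) = (L N + L (N + 1)) / 2 := by
    intro N
    induction N with
    | zero => simp [hL]
    | succ N ih =>
      rw [Finset.sum_Icc_succ_top (by omega), ← add_assoc, ih, hL]
      simp only [Finset.sum_range_succ]
      push_cast
      have h1 : (2 * ((N : ℝ) + 1)) ^ 2 - 1 = (2 * N + 1) * (2 * N + 3) := by ring
      have h2 : (2 * (N : ℝ) + 1) ≠ 0 := by positivity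
      have h3 : (2 * (N : ℝ) + 3) ≠ 0 := by positivity
      rw [h1]
      field_simp
      ring
  simp only [key]
  have h := Real.tendsto_sum_pi_div_four
  have h2 : Tendsto (fun N => (L N + L (N + 1)) / 2) atTop (nhds ((π / 4 + π / 4) / 2)) :=
    (h.add (h.comp (tendsto_add_atTop_nat 1))).div_const 2
  convert h2 using 2
  ring
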